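/- For the exponential distribution with β > 0, the probabilities w_n = F(v_n) = 1 - e^{-v_n/β} along the value recurrence v_{n+1} = v_n + β e^{-v_n/β} (v_0 ≥ 0) satisfy n·(1 - w_n) → 1 as n → ∞. -/

import Mathlib

open Filter Real

/-- For the exponential distribution, the probabilities `w_n = 1 - e^{-v_n/β}` along the
value recurrence `v_{n+1} = v_n + β e^{-v_n/β}` (with `v_0 ≥ 0`) satisfy
`n (1 - w_n) → 1`. -/
theorem stmt_12 (β : ℝ) (hβ : 0 < β) (v w : ℕ → ℝ) (hv0 : 0 ≤ v 0)
    (hrec : ∀ n, v (n + 1) = v n + β * Real.exp (-(v n) / β))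
    (hw : ∀ n, w n = 1 - Real.exp (-(v n) / β)) :
    Tendsto (fun n : ℕ => (n : ℝ) * (1 - w n)) atTop (nhds 1) := by
  set a : ℕ → ℝ := fun n => Real.exp (-(v n) / β) with ha
  set b : ℕ → ℝ := fun n => Real.exp (v n / β) with hb
  have hab : ∀ n, a n = (b n)⁻¹ := by
    intro n
    simp only [ha, hb, neg_div, Real.exp_neg]
  have hba : ∀ n, b n * a n = 1 := by
    intro n
    rw [hab, mul_inv_cancel₀ (Real.exp_pos _).ne']
  have hbpos : ∀ n, 0 < b n := fun n => Real.exp_pos _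
  have hapos : ∀ n, 0 < a n := fun n => Real.exp_pos _
  -- recurrence for b
  have hbrec : ∀ n, b (n + 1) = b n * Real.exp (a n) := by
    intro n
    show Real.exp (v (n + 1) / β) = Real.exp (v n / β) * Real.exp (a n)
    rw [← Real.exp_add, hrec n, add_div, mul_div_cancel_left₀ _ hβ.ne']
  -- b n ≥ n + 1
  have hbge : ∀ n : ℕ, (n : ℝ) + 1 ≤ b n := by
    intro n
    induction n with
    | zero =>
      simp only [hb, Nat.cast_zero, zero_add]
      calc (1 : ℝ) = Real.exp 0 := (Real.exp_zero).symm
        _ ≤ Real.exp (v 0 / β) := Real.exp_le_exp.2 (div_nonneg hv0 hβ.le)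
    | succ n ih =>
      have h1 : b n + 1 ≤ b (n + 1) := by
        rw [hbrec n]
        have := Real.add_one_le_exp (a n)
        calc b n + 1 = b n + b n * a n := by rw [hba]
          _ = b n * (a n + 1) := by ring
          _ ≤ b n * Real.exp (a n) := by
              apply mul_le_mul_of_nonneg_left _ (hbpos n).le
              linarith
      push_cast
      linarith
  -- a n → 0
  have ha0 : Tendsto a atTop (nhds 0) := by
    have h1 : Tendsto (fun n : ℕ => ((n : ℝ) + 1)⁻¹) atTop (nhds 0) :=
      tendsto_one_div_add_atTop_nhds_zero_nat.congr (by intro n; simp [one_div])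
    refine squeeze_zero (fun n => (hapos n).le) (fun n => ?_) h1
    rw [hab]
    exact inv_anti₀ (by positivity) (hbge n)
  -- differences b(n+1) - b n → 1
  have hdiff : Tendsto (fun n => b (n + 1) - b n) atTop (nhds 1) := by
    have hslope : Tendsto (fun t : ℝ => t⁻¹ * (Real.exp t - 1)) (nhdsWithin 0 {0}ᶜ)
        (nhds 1) := by
      have := (Real.hasDerivAt_exp 0).tendsto_slope_zero
      simpa [Real.exp_zero] using this
    have ha0' : Tendsto a atTop (nhdsWithin 0 {0}ᶜ) :=
      tendsto_nhdsWithin_of_tendsto_nhds_of_eventually_within _ ha0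
        (Eventually.of_forall fun n => by simp [(hapos n).ne'])
    have := hslope.comp ha0'
    refine this.congr fun n => ?_
    simp only [Function.comp]
    have hinv : (a n)⁻¹ = b n := inv_eq_of_mul_eq_one_left (hba n)
    rw [hbrec n, hinv]
    ring
  -- Cesàro: b n / n → 1
  have hbn : Tendsto (fun n : ℕ => b n / n) atTop (nhds 1) := by
    have hces := hdiff.cesaro
    have key : ∀ n : ℕ, b n / n = b 0 / n + (n : ℝ)⁻¹ * ∑ i ∈ Finset.range n, (b (i + 1) - b i) := by
      intro n
      rw [Finset.sum_range_sub]
      field_simp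
      ring
    have h0 : Tendsto (fun n : ℕ => b 0 / n) atTop (nhds 0) :=
      tendsto_const_nhds.div_atTop tendsto_natCast_atTop_atTop
    have := h0.add hces
    rw [zero_add] at this
    exact this.congr fun n => (key n).symm
  -- conclude
  have hfin : Tendsto (fun n : ℕ => (n : ℝ) / b n) atTop (nhds 1) := by
    have := hbn.inv₀ one_ne_zero
    rw [inv_one] at this
    refine this.congr' ?_
    filter_upwards [eventually_gt_atTop 0] with n hn
    rw [inv_div]
  refine hfin.congr fun n => ?_
  rw [hw n, sub_sub_cancel]
  show (n : ℝ) / b n = (n : ℝ) * a n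
  rw [hab n, div_eq_mul_inv]
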